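/- Let G be a finite group, r a prime, and suppose there exist τ ∈ Aut(G) and an inverse-closed subset S ⊆ G \ {1} such that {S, S^τ, …, S^{τ^{r-1}}} is a partition of G \ {1}. Write o(τ) = r^e·m with gcd(m, r) = 1, and set σ := τ^m. Then {S, S^σ, S^{σ²}, …, S^{σ^{r-1}}} = {S, S^τ, …, S^{τ^{r-1}}} as collections of sets; in particular {S, S^σ, …, S^{σ^{r-1}}} is a partition of G \ {1} and σ has order a power of r. -/

import Mathlib

/-- If `{S, S^τ, …, S^{τ^{r-1}}}` partitions `G \ {1}` (`r` prime, `S`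
inverse-closed), and `o(τ) = r^e·m` with `gcd(m,r)=1`, then with `σ := τ^m` the collection
`{S, S^σ, …, S^{σ^{r-1}}}` coincides with `{S, S^τ, …, S^{τ^{r-1}}}`; in particular it is a
partition of `G \ {1}` and `σ` has order a power of `r`. -/
theorem stmt5 {G : Type*} [Group G] [Fintype G] (r e m : ℕ) (hr : r.Prime)
    (τ : MulAut G) (S : Set G) (hS1 : S ⊆ {g : G | g ≠ 1}) (hSinv : S⁻¹ = S)
    (hpair : Pairwise fun i j : Fin r =>
      Disjoint ((⇑(τ ^ (i : ℕ))) '' S) ((⇑(τ ^ (j : ℕ))) '' S))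
    (hunion : (⋃ i : Fin r, (⇑(τ ^ (i : ℕ))) '' S) = {g : G | g ≠ 1})
    (hord : orderOf τ = r ^ e * m) (hm : Nat.Coprime m r) :
    (Set.range (fun i : Fin r => (⇑((τ ^ m) ^ (i : ℕ))) '' S)
        = Set.range (fun i : Fin r => (⇑(τ ^ (i : ℕ))) '' S)) ∧
    (Pairwise fun i j : Fin r =>
      Disjoint ((⇑((τ ^ m) ^ (i : ℕ))) '' S) ((⇑((τ ^ m) ^ (j : ℕ))) '' S)) ∧
    (⋃ i : Fin r, (⇑((τ ^ m) ^ (i : ℕ))) '' S) = {g : G | g ≠ 1} ∧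
    (∃ f : ℕ, orderOf (τ ^ m) = r ^ f) := by
  haveI : Fact r.Prime := ⟨hr⟩
  have hr0 : 0 < r := hr.pos
  have hmul : ∀ (a b : MulAut G), ⇑(a * b) '' S = ⇑a '' (⇑b '' S) := by
    intro a b
    rw [Set.image_image]; rfl
  -- images of {g | g ≠ 1} under any automorphism
  have hT : ∀ (σ : MulAut G), ⇑σ '' {g : G | g ≠ 1} = {g : G | g ≠ 1} := by
    intro σ
    ext g
    simp only [Set.mem_image, Set.mem_setOf_eq]
    constructor
    · rintro ⟨x, hx, rfl⟩
      intro h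
      exact hx (σ.injective (by simpa using h))
    · intro hg
      refine ⟨σ⁻¹ g, fun h => hg ?_, by simp⟩
      have := congrArg σ h
      simpa using this
  -- Step 1 : τ^r '' S = S
  have hstep : ⇑(τ ^ r) '' S = S := by
    have hsub : ⇑(τ ^ r) '' S ⊆ S := by
      intro g hg
      have hg1 : g ∈ {g : G | g ≠ 1} := by
        have : ⇑(τ ^ r) '' S ⊆ ⇑(τ ^ r) '' {g : G | g ≠ 1} :=
          Set.image_mono hS1
        have := this hg
        rwa [hT] at this
      rw [← hunion] at hg1
      obtain ⟨i, hi⟩ := Set.mem_iUnion.mp hg1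
      rcases Nat.eq_zero_or_pos (i : ℕ) with h0 | h0
      · simpa [h0] using hi
      · exfalso
        have hdisj : Disjoint (⇑(τ ^ r) '' S) (⇑(τ ^ (i : ℕ)) '' S) := by
          have h1 : τ ^ r = τ * τ ^ (r - 1) := by
            rw [← pow_succ']
            congr 1
            omega
          have h2 : τ ^ (i : ℕ) = τ * τ ^ ((i : ℕ) - 1) := by
            rw [← pow_succ']
            congr 1
            omega
          rw [h1, h2, hmul, hmul]
          have hne : (⟨r - 1, by omega⟩ : Fin r) ≠ ⟨(i : ℕ) - 1, by omega⟩ := by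
            have : (i : ℕ) < r := i.isLt
            intro h
            have := congrArg Fin.val h
            simp at this
            omega
          exact Set.disjoint_image_of_injective τ.injective (hpair hne)
        exact Set.disjoint_left.mp hdisj hg hi
    exact Set.eq_of_subset_of_ncard_le hsub
      (le_of_eq (Set.ncard_image_of_injective S (τ ^ r).injective).symm)
  -- Step 2 : (τ^r)^q '' S = S
  have hper : ∀ q : ℕ, ⇑((τ ^ r) ^ q) '' S = S := by
    intro q
    induction q with
    | zero => simp
    | succ q ih =>
      rw [pow_succ, hmul, hstep, ih]
  -- Step 3 : τ^k '' S = τ^(k % r) '' S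
  have hkey : ∀ k : ℕ, ⇑(τ ^ k) '' S = ⇑(τ ^ (k % r)) '' S := by
    intro k
    have : τ ^ k = τ ^ (k % r) * (τ ^ r) ^ (k / r) := by
      rw [← pow_mul, ← pow_add, Nat.mod_add_div]
    rw [this, hmul, hper]
  -- the index permutation
  set a : Fin r → Fin r := fun i => ⟨(m * (i : ℕ)) % r, Nat.mod_lt _ hr0⟩ with ha
  have hka : ∀ i : Fin r, ⇑((τ ^ m) ^ (i : ℕ)) '' S = ⇑(τ ^ ((a i : ℕ))) '' S := by
    intro i
    rw [← pow_mul, hkey]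
  have hm0 : (m : ZMod r) ≠ 0 := by
    rw [Ne, ZMod.natCast_eq_zero_iff]
    intro hdvd
    exact hr.one_lt.ne' (Nat.Coprime.eq_one_of_dvd hm.symm hdvd)
  have hsurj : Function.Surjective a := by
    intro j
    refine ⟨⟨((m : ZMod r)⁻¹ * (j : ℕ)).val, ZMod.val_lt _⟩, ?_⟩
    apply Fin.ext
    show (m * ((m : ZMod r)⁻¹ * ((j : ℕ) : ZMod r)).val) % r = (j : ℕ)
    have : ((m * ((m : ZMod r)⁻¹ * ((j : ℕ) : ZMod r)).val : ℕ) : ZMod r)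
        = ((j : ℕ) : ZMod r) := by
      push_cast
      rw [ZMod.natCast_val, ZMod.cast_id]
      rw [← mul_assoc, mul_inv_cancel₀ hm0, one_mul]
    have h2 := congrArg ZMod.val this
    rwa [ZMod.val_natCast, ZMod.val_cast_of_lt j.isLt] at h2
  have hinj : Function.Injective a := Finite.injective_iff_surjective.mpr hsurj
  refine ⟨?_, ?_, ?_, e, ?_⟩
  · have : (fun i : Fin r => ⇑((τ ^ m) ^ (i : ℕ)) '' S)
        = (fun i : Fin r => ⇑(τ ^ (i : ℕ)) '' S) ∘ a := by
      funext i; exact hka i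
    rw [this, Set.range_comp, hsurj.range_eq, Set.image_univ]
  · intro i j hij
    rw [hka, hka]
    exact hpair (hinj.ne hij)
  · have : (fun i : Fin r => ⇑((τ ^ m) ^ (i : ℕ)) '' S)
        = (fun i : Fin r => ⇑(τ ^ (i : ℕ)) '' S) ∘ a := by
      funext i; exact hka i
    calc (⋃ i : Fin r, (⇑((τ ^ m) ^ (i : ℕ))) '' S)
        = ⋃₀ Set.range (fun i : Fin r => ⇑((τ ^ m) ^ (i : ℕ)) '' S) :=
          (Set.sUnion_range _).symm
      _ = ⋃₀ Set.range (fun i : Fin r => ⇑(τ ^ (i : ℕ)) '' S) := by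
          rw [this, Set.range_comp, hsurj.range_eq, Set.image_univ]
      _ = ⋃ i : Fin r, (⇑(τ ^ (i : ℕ))) '' S := Set.sUnion_range _
      _ = {g : G | g ≠ 1} := hunion
  · have hm1 : m ≠ 0 := by
      intro h
      rw [h] at hm
      simp [Nat.Coprime] at hm
      exact hr.one_lt.ne' hm
    rw [orderOf_pow, hord, Nat.gcd_eq_right ⟨r ^ e, mul_comm _ _⟩,
      Nat.mul_div_cancel _ (Nat.pos_of_ne_zero hm1)]
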